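/- Let c > 0, r₂ ∈ ℝ, and let A ⊆ [0, 2π] be a measurable set. Let G : ℝ × ℝ → ℝ satisfy: G(r, θ) > 0 for all r ≥ r₂ and θ ∈ [0, 2π]; for each θ ∈ A, the function r ↦ G(r, θ) is twice differentiable on [r₂, ∞) with ∂²G/∂r²(r, θ) ≥ c² · G(r, θ) and ∂G/∂r(r₂, θ) > 0; the function θ ↦ G(r₂, θ) is integrable on A. Then for every R ≥ r₂ and every differentiable function r : [0, 2π] → ℝ with r(θ) ≥ R for all θ (and with θ ↦ √(r'(θ)² + G(r(θ), θ)²) integrable), one has ∫₀^{2π} √(r'(θ)² + G(r(θ), θ)²) dθ ≥ cosh(c(R − r₂)) · ∫_A G(r₂, θ) dθ. -/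

import Mathlib

open Set Real MeasureTheory

lemma ode_comp {c r₂ : ℝ} (hc : 0 < c) {f f' f'' : ℝ → ℝ}
    (hf1 : ∀ x ∈ Ici r₂, HasDerivWithinAt f (f' x) (Ici r₂) x)
    (hf2 : ∀ x ∈ Ici r₂, HasDerivWithinAt f' (f'' x) (Ici r₂) x)
    (hpos : ∀ x ∈ Ici r₂, 0 < f x)
    (hineq : ∀ x ∈ Ici r₂, c ^ 2 * f x ≤ f'' x)
    (hder : 0 < f' r₂) :
    ∀ x ∈ Ici r₂, Real.cosh (c * (x - r₂)) * f r₂ ≤ f x := by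
  set g : ℝ → ℝ := fun x => Real.cosh (c * (x - r₂)) with hgdef
  set g' : ℝ → ℝ := fun x => c * Real.sinh (c * (x - r₂)) with hg'def
  have hu : ∀ x : ℝ, HasDerivAt (fun x => c * (x - r₂)) c x := by
    intro x
    simpa using (((hasDerivAt_id x).sub_const r₂).const_mul c)
  have hg : ∀ x : ℝ, HasDerivAt g (g' x) x := by
    intro x
    simpa [g, g', mul_comm, Function.comp_def] using (Real.hasDerivAt_cosh (c * (x - r₂))).comp x (hu x)
  have hg' : ∀ x : ℝ, HasDerivAt g' (c ^ 2 * g x) x := by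
    intro x
    have : HasDerivAt (fun y => c * Real.sinh (c * (y - r₂))) (c * (Real.cosh (c * (x - r₂)) * c)) x :=
      by simpa [Function.comp_def] using ((Real.hasDerivAt_sinh (c * (x - r₂))).comp x (hu x)).const_mul c
    convert this using 1
    show c ^ 2 * Real.cosh (c * (x - r₂)) = _
    ring
  have hgpos : ∀ x : ℝ, 0 < g x := fun x => Real.cosh_pos _
  -- Wronskian W = f' g − f g'
  set W : ℝ → ℝ := fun x => f' x * g x - f x * g' x with hWdef
  have hW : ∀ x ∈ Ici r₂, HasDerivWithinAt W
      ((f'' x * g x + f' x * g' x) - (f' x * g' x + f x * (c ^ 2 * g x))) (Ici r₂) x := by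
    intro x hx
    exact ((hf2 x hx).mul (hg x).hasDerivWithinAt).sub
      ((hf1 x hx).mul (hg' x).hasDerivWithinAt)
  have hWmono : MonotoneOn W (Ici r₂) := by
    apply monotoneOn_of_hasDerivWithinAt_nonneg (convex_Ici r₂)
      (fun x hx => (hW x hx).continuousWithinAt)
      (fun x hx => (hW x (interior_subset hx)).mono interior_subset)
    intro x hx
    rw [interior_Ici] at hx
    have hx' : x ∈ Ici r₂ := Set.Ioi_subset_Ici_self hx
    have h1 : c ^ 2 * f x ≤ f'' x := hineq x hx'
    nlinarith [hgpos x, hpos x hx']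
  have hWpos : ∀ x ∈ Ici r₂, 0 < W x := by
    intro x hx
    have : W r₂ ≤ W x := hWmono (self_mem_Ici) hx hx
    have hWr₂ : W r₂ = f' r₂ := by simp [W, g, g']
    linarith [hder, this, hWr₂ ▸ this]
  -- quotient q = f / g is monotone
  set q : ℝ → ℝ := fun x => f x / g x with hqdef
  have hq : ∀ x ∈ Ici r₂, HasDerivWithinAt q (W x / g x ^ 2) (Ici r₂) x := by
    intro x hx
    exact (hf1 x hx).div (hg x).hasDerivWithinAt (hgpos x).ne'
  have hqmono : MonotoneOn q (Ici r₂) := by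
    apply monotoneOn_of_hasDerivWithinAt_nonneg (convex_Ici r₂)
      (fun x hx => (hq x hx).continuousWithinAt)
      (fun x hx => (hq x (interior_subset hx)).mono interior_subset)
    intro x hx
    rw [interior_Ici] at hx
    exact div_nonneg (hWpos x (Set.Ioi_subset_Ici_self hx)).le (sq_nonneg _)
  intro x hx
  have h1 : q r₂ ≤ q x := hqmono self_mem_Ici hx hx
  have h2 : q r₂ = f r₂ := by simp [q, g]
  rw [h2] at h1
  have := (le_div_iff₀ (hgpos x)).mp h1
  linarith [this]
open Set Real MeasureTheory

/-- Key length estimate in the proof of Theorem 3.7: any curve `σ(θ) = (r(θ), θ)`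
staying in the region `{r ≥ R}` has length at least
`cosh(c(R − r₂)) ∫_A G(r₂, θ) dθ`. -/
theorem stmt7 (c r₂ : ℝ) (hc : 0 < c)
    (A : Set ℝ) (hA : MeasurableSet A) (hAsub : A ⊆ Icc (0:ℝ) (2 * π))
    (G Gr Grr : ℝ × ℝ → ℝ)
    (hGpos : ∀ r ∈ Ici r₂, ∀ θ ∈ Icc (0:ℝ) (2 * π), 0 < G (r, θ))
    (hd1 : ∀ θ ∈ A, ∀ r ∈ Ici r₂,
      HasDerivWithinAt (fun s => G (s, θ)) (Gr (r, θ)) (Ici r₂) r)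
    (hd2 : ∀ θ ∈ A, ∀ r ∈ Ici r₂,
      HasDerivWithinAt (fun s => Gr (s, θ)) (Grr (r, θ)) (Ici r₂) r)
    (hineq : ∀ θ ∈ A, ∀ r ∈ Ici r₂, c ^ 2 * G (r, θ) ≤ Grr (r, θ))
    (hder : ∀ θ ∈ A, 0 < Gr (r₂, θ))
    (hint : IntegrableOn (fun θ => G (r₂, θ)) A)
    (R : ℝ) (hR : r₂ ≤ R)
    (r r' : ℝ → ℝ)
    (hr : ∀ θ ∈ Icc (0:ℝ) (2 * π), HasDerivWithinAt r (r' θ) (Icc (0:ℝ) (2 * π)) θ)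
    (hrge : ∀ θ ∈ Icc (0:ℝ) (2 * π), R ≤ r θ)
    (hint2 : IntervalIntegrable
      (fun θ => Real.sqrt ((r' θ) ^ 2 + (G (r θ, θ)) ^ 2)) volume 0 (2 * π)) :
    Real.cosh (c * (R - r₂)) * ∫ θ in A, G (r₂, θ) ≤
      ∫ θ in (0:ℝ)..(2 * π), Real.sqrt ((r' θ) ^ 2 + (G (r θ, θ)) ^ 2) := by
  have h2pi : (0:ℝ) ≤ 2 * π := by positivity
  set h : ℝ → ℝ := fun θ => Real.sqrt ((r' θ) ^ 2 + (G (r θ, θ)) ^ 2) with hh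
  have key : ∀ θ ∈ A, Real.cosh (c * (R - r₂)) * G (r₂, θ) ≤ h θ := by
    intro θ hθ
    have hθI : θ ∈ Icc (0:ℝ) (2 * π) := hAsub hθ
    have hrθ : r θ ∈ Ici r₂ := le_trans hR (hrge θ hθI)
    have hcomp := ode_comp hc (hd1 θ hθ) (hd2 θ hθ)
      (fun x hx => hGpos x hx θ hθI) (hineq θ hθ) (hder θ hθ) (r θ) hrθ
    have hcosh : Real.cosh (c * (R - r₂)) ≤ Real.cosh (c * (r θ - r₂)) := by
      apply Real.cosh_le_cosh.mpr
      rw [abs_of_nonneg (by nlinarith [hrge θ hθI] : (0:ℝ) ≤ c * (R - r₂)),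
        abs_of_nonneg (by nlinarith [hrge θ hθI] : (0:ℝ) ≤ c * (r θ - r₂))]
      nlinarith [hrge θ hθI]
    have hG2pos : 0 < G (r₂, θ) := hGpos r₂ self_mem_Ici θ hθI
    have hGle : G (r θ, θ) ≤ h θ := by
      rw [hh]
      have : 0 ≤ G (r θ, θ) := (hGpos _ hrθ θ hθI).le
      calc G (r θ, θ) = Real.sqrt (G (r θ, θ) ^ 2) := (Real.sqrt_sq this).symm
        _ ≤ Real.sqrt ((r' θ) ^ 2 + G (r θ, θ) ^ 2) :=
            Real.sqrt_le_sqrt (by nlinarith [sq_nonneg (r' θ)])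
    calc Real.cosh (c * (R - r₂)) * G (r₂, θ)
        ≤ Real.cosh (c * (r θ - r₂)) * G (r₂, θ) := by
          exact mul_le_mul_of_nonneg_right hcosh hG2pos.le
      _ ≤ G (r θ, θ) := hcomp
      _ ≤ h θ := hGle
  have hIoc : IntegrableOn h (Ioc 0 (2 * π)) :=
    (intervalIntegrable_iff_integrableOn_Ioc_of_le h2pi).mp hint2
  have hIcc : IntegrableOn h (Icc 0 (2 * π)) := by
    rwa [integrableOn_Icc_iff_integrableOn_Ioc]
  have hA' : IntegrableOn h A := hIcc.mono_set hAsub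
  have step1 : Real.cosh (c * (R - r₂)) * ∫ θ in A, G (r₂, θ) ≤ ∫ θ in A, h θ := by
    rw [← integral_const_mul]
    exact setIntegral_mono_on (hint.const_mul _) hA' hA key
  have step2 : ∫ θ in A, h θ ≤ ∫ θ in Icc (0:ℝ) (2 * π), h θ := by
    apply setIntegral_mono_set hIcc
    · exact Filter.Eventually.of_forall fun θ => Real.sqrt_nonneg _
    · exact HasSubset.Subset.eventuallyLE hAsub
  have step3 : (∫ θ in Icc (0:ℝ) (2 * π), h θ) = ∫ θ in (0:ℝ)..(2 * π), h θ := by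
    rw [intervalIntegral.integral_of_le h2pi, integral_Icc_eq_integral_Ioc]
  linarith [step1, step2, step3 ▸ step2]
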